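/- Let f : X → Y be a perfect irreducible continuous surjection. If Y is quasi κ-metrizable, then X is quasi κ-metrizable, via d(x,C) := ρ(f(x), f(C)) for regularly closed C ⊆ X, where ρ is a quasi κ-metric on Y. -/

import Mathlib

def RegClosed {X : Type*} [TopologicalSpace X] (C : Set X) : Prop :=
  C = closure (interior C)

def RegOpen {X : Type*} [TopologicalSpace X] (U : Set X) : Prop :=
  U = interior (closure U)

structure IsQuasiKappaMetric {X : Type*} [TopologicalSpace X] (ρ : X → Set X → ℝ) : Prop where
  nonneg : ∀ x C, RegClosed C → 0 ≤ ρ x C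
  k1star : ∀ C : Set X, RegClosed C → ∃ V : Set X, IsOpen V ∧ V ⊆ Cᶜ ∧
    Cᶜ ⊆ closure V ∧ ∀ x, 0 < ρ x C ↔ x ∈ V
  k2 : ∀ x (C C' : Set X), RegClosed C → RegClosed C' → C ⊆ C' → ρ x C' ≤ ρ x C
  k3 : ∀ C : Set X, RegClosed C → Continuous (fun x => ρ x C)
  k4 : ∀ S : Set (Set X), S.Nonempty → (∀ C ∈ S, RegClosed C) → IsChain (· ⊆ ·) S →
    ∀ x, ρ x (closure (⋃₀ S)) = sInf {r : ℝ | ∃ C ∈ S, r = ρ x C}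

section Aux
variable {X Y : Type*} [TopologicalSpace X] [TopologicalSpace Y] {f : X → Y}

lemma aux_image_closure (hcont : Continuous f) (hclosed : IsClosedMap f) (A : Set X) :
    f '' closure A = closure (f '' A) := by
  apply subset_antisymm (hcont.continuousOn.image_closure.trans (closure_mono (by simp)))
  · exact closure_minimal (Set.image_mono (f := f) subset_closure)
      (hclosed _ isClosed_closure)

lemma aux_regClosed_closure_open {V : Set X} (hV : IsOpen V) : RegClosed (closure V) := by
  refine subset_antisymm ?_ ?_
  · exact closure_mono (hV.subset_interior_iff.mpr subset_closure)
  · exact (closure_mono interior_subset).trans (by rw [closure_closure])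

lemma aux_sharp_nonempty (hirr : ∀ F : Set X, IsClosed F → f '' F = Set.univ → F = Set.univ)
    {U : Set X} (hU : IsOpen U) (hne : U.Nonempty) : ((f '' Uᶜ)ᶜ).Nonempty := by
  rw [Set.nonempty_compl]
  intro h
  have : Uᶜ = Set.univ := hirr _ hU.isClosed_compl h
  rw [Set.compl_univ_iff] at this
  exact hne.ne_empty this

lemma aux_sharp_subset_image (hsurj : Function.Surjective f) {U : Set X} :
    (f '' Uᶜ)ᶜ ⊆ f '' U := by
  intro y hy
  obtain ⟨x, rfl⟩ := hsurj y
  refine ⟨x, ?_, rfl⟩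
  by_contra hx
  exact hy ⟨x, hx, rfl⟩

lemma aux_main (hcont : Continuous f) (hclosed : IsClosedMap f)
    (hsurj : Function.Surjective f)
    (hirr : ∀ F : Set X, IsClosed F → f '' F = Set.univ → F = Set.univ)
    {U : Set X} (hU : IsOpen U) :
    f '' closure U = closure ((f '' Uᶜ)ᶜ) := by
  apply subset_antisymm
  · rintro _ ⟨x, hx, rfl⟩
    rw [mem_closure_iff]
    intro W hW hfxW
    set O : Set X := f ⁻¹' W ∩ U with hO
    have hOopen : IsOpen O := (hW.preimage hcont).inter hU
    have hOne : O.Nonempty := by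
      have := (mem_closure_iff.mp hx) _ (hW.preimage hcont) hfxW
      exact this
    obtain ⟨y, hy⟩ := aux_sharp_nonempty hirr hOopen hOne
    obtain ⟨x', hx', rfl⟩ := aux_sharp_subset_image hsurj hy
    have hsub : (f '' Oᶜ)ᶜ ⊆ (f '' Uᶜ)ᶜ :=
      Set.compl_subset_compl.mpr (Set.image_mono (f := f) (Set.compl_subset_compl.mpr
        Set.inter_subset_right))
    exact ⟨f x', hx'.1, hsub hy⟩
  · apply closure_minimal _ (hclosed _ isClosed_closure)
    exact (aux_sharp_subset_image hsurj).trans (Set.image_mono (f := f) subset_closure)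

lemma aux_regClosed_image (hcont : Continuous f) (hclosed : IsClosedMap f)
    (hsurj : Function.Surjective f)
    (hirr : ∀ F : Set X, IsClosed F → f '' F = Set.univ → F = Set.univ)
    {C : Set X} (hC : RegClosed C) : RegClosed (f '' C) := by
  rw [hC, aux_main hcont hclosed hsurj hirr isOpen_interior]
  exact aux_regClosed_closure_open (hclosed _ isOpen_interior.isClosed_compl).isOpen_compl

end Aux

theorem stmt15 {X Y : Type*} [TopologicalSpace X] [TopologicalSpace Y]
    (f : X → Y) (hcont : Continuous f) (hclosed : IsClosedMap f)
    (hfib : ∀ y : Y, IsCompact (f ⁻¹' {y})) (hsurj : Function.Surjective f)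
    (hirr : ∀ F : Set X, IsClosed F → f '' F = Set.univ → F = Set.univ)
    (ρ : Y → Set Y → ℝ) (hρ : IsQuasiKappaMetric ρ) :
    IsQuasiKappaMetric (fun (x : X) (C : Set X) => ρ (f x) (f '' C)) := by
  have himg : ∀ {C : Set X}, RegClosed C → RegClosed (f '' C) :=
    fun h => aux_regClosed_image hcont hclosed hsurj hirr h
  constructor
  · exact fun x C hC => hρ.nonneg _ _ (himg hC)
  · intro C hC
    have hCclosed : IsClosed C := hC ▸ isClosed_closure
    obtain ⟨W, hWopen, hWsub, hWdense, hWiff⟩ := hρ.k1star (f '' C) (himg hC)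
    refine ⟨f ⁻¹' W, hWopen.preimage hcont, ?_, ?_, fun x => hWiff (f x)⟩
    · intro x hx hxC
      exact hWsub hx ⟨x, hxC, rfl⟩
    · intro x hx
      rw [mem_closure_iff]
      intro O hO hxO
      set O' : Set X := O ∩ Cᶜ with hO'
      have hO'open : IsOpen O' := hO.inter hCclosed.isOpen_compl
      have hO'ne : O'.Nonempty := ⟨x, hxO, hx⟩
      obtain ⟨y0, hy0⟩ := aux_sharp_nonempty hirr hO'open hO'ne
      -- (O')♯ ⊆ (f '' C)ᶜ
      have hsub : (f '' O'ᶜ)ᶜ ⊆ (f '' C)ᶜ := by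
        apply Set.compl_subset_compl.mpr
        apply Set.image_mono (f := f)
        intro z hz
        exact fun hz' => hz'.2 hz
      have hy0W : y0 ∈ closure W := hWdense (hsub hy0)
      have : ((f '' O'ᶜ)ᶜ ∩ W).Nonempty := by
        have := mem_closure_iff.mp hy0W _ (hclosed _ hO'open.isClosed_compl).isOpen_compl hy0
        exact this
      obtain ⟨y, hyS, hyW⟩ := this
      obtain ⟨x', hx', rfl⟩ := aux_sharp_subset_image hsurj hyS
      exact ⟨x', hx'.1, hyW⟩
  · exact fun x C C' hC hC' hsub =>
      hρ.k2 _ _ _ (himg hC) (himg hC') (Set.image_mono (f := f) hsub)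
  · exact fun C hC => (hρ.k3 _ (himg hC)).comp hcont
  · intro S hSne hSreg hSchain x
    have key : f '' closure (⋃₀ S) = closure (⋃₀ (Set.image f '' S)) := by
      simp [aux_image_closure hcont hclosed, Set.sUnion_image, Set.image_sUnion]
    have h4 := hρ.k4 (Set.image f '' S) (hSne.image _)
      (by rintro _ ⟨C, hC, rfl⟩; exact himg (hSreg C hC))
      (hSchain.image_of_map_rel _ _ _ (fun _ _ h => Set.image_mono (f := f) h)) (f x)
    show ρ (f x) (f '' closure (⋃₀ S)) = sInf {r : ℝ | ∃ C ∈ S, r = ρ (f x) (f '' C)}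
    rw [key, h4]
    congr 1
    ext r
    constructor
    · rintro ⟨_, ⟨C, hC, rfl⟩, rfl⟩; exact ⟨C, hC, rfl⟩
    · rintro ⟨C, hC, rfl⟩; exact ⟨f '' C, ⟨C, hC, rfl⟩, rfl⟩
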